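/- arXiv:2206.12635 — 2 statements merged into one kernel-verified Lean document; each statement's English description precedes it below -/
import Mathlib

section
/- Let a ≥ b ≥ 1 be integers and set k = a² + ab + b². Take r = 1/2 (regular hexagons of unit diameter) and let Λ be the subgroup of ℤ² generated by (a, b) and (−b, a + b), which has index k in ℤ² (and whose corresponding set of tile centers is again a triangular lattice). Then the separation of the induced k-colouring equals √((3a + 3b − 4)² + 3(a − b)²) / 4. -/
noncomputable section

/-- The Euclidean plane ℝ². -/
abbrev Plane := EuclideanSpace ℝ (Fin 2)

/-- The point (a, b) of the Euclidean plane. -/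
def pt (a b : ℝ) : Plane := WithLp.toLp 2 ![a, b]

/-- The semi-regular hexagon K(r): with y = r/2 and x = √(1 − r²)/2, the closed convex
hull of the six points (0, 1/2), (x, y), (x, −y), (0, −1/2), (−x, −y), (−x, y). -/
def hexK (r : ℝ) : Set Plane :=
  convexHull ℝ
    {pt 0 (1 / 2), pt (Real.sqrt (1 - r ^ 2) / 2) (r / 2),
      pt (Real.sqrt (1 - r ^ 2) / 2) (-(r / 2)), pt 0 (-(1 / 2)),
      pt (-(Real.sqrt (1 - r ^ 2) / 2)) (-(r / 2)),
      pt (-(Real.sqrt (1 - r ^ 2) / 2)) (r / 2)}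

/-- The center c(i, j) = ((2i + j)·x, j·(y + 1/2)) of the tile with index (i, j). -/
def center (r : ℝ) (i j : ℤ) : Plane :=
  pt ((2 * (i : ℝ) + (j : ℝ)) * (Real.sqrt (1 - r ^ 2) / 2)) ((j : ℝ) * (r / 2 + 1 / 2))

/-- The tile T(i, j) = c(i, j) + K(r). -/
def tile (r : ℝ) (i j : ℤ) : Set Plane :=
  (fun p => center r i j + p) '' hexK r

/-- The set of distances realized by points in two distinct same-coloured tiles,
for the colouring of the tiles T(i, j) by the cosets of a subgroup Λ ≤ ℤ²:
tiles T(i, j) and T(i', j') get the same colour iff (i − i', j − j') ∈ Λ.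
The separation of the colouring is the infimum of this set. -/
def sameColourDists (r : ℝ) (Λ : AddSubgroup (ℤ × ℤ)) : Set ℝ :=
  {d : ℝ | ∃ (i j i' j' : ℤ) (p q : Plane),
    (i, j) ≠ (i', j') ∧ (i - i', j - j') ∈ Λ ∧
    p ∈ tile r i j ∧ q ∈ tile r i' j' ∧ d = dist p q}

end

/-! ### Auxiliary material for the index computation -/

section IndexAux

variable (a b : ℤ)

/-- Multiplication by π = a + bω (where ω² = ω − 1) on ℤ×ℤ. -/
private def mulPi : ℤ × ℤ →+ ℤ × ℤ :=
  AddMonoidHom.mk' (fun z => (a * z.1 - b * z.2, b * z.1 + (a + b) * z.2))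
    (by intro z w; ext <;> simp <;> ring)

/-- Multiplication by π̄ = (a+b) − bω. -/
private def mulPiBar : ℤ × ℤ →+ ℤ × ℤ :=
  AddMonoidHom.mk' (fun z => ((a + b) * z.1 + b * z.2, -b * z.1 + a * z.2))
    (by intro z w; ext <;> simp <;> ring)

/-- Conjugation (s,t) ↦ (s+t,−t) as an additive automorphism of ℤ×ℤ. -/
private def conjE : ℤ × ℤ ≃+ ℤ × ℤ where
  toFun z := (z.1 + z.2, -z.2)
  invFun z := (z.1 + z.2, -z.2)
  left_inv z := by ext <;> simp
  right_inv z := by ext <;> simp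
  map_add' z w := by ext <;> simp <;> ring

private theorem index_eq (hb : 1 ≤ b) (hab : b ≤ a) :
    ((AddSubgroup.closure {((a : ℤ), b), (-b, a + b)} : AddSubgroup (ℤ × ℤ)).index : ℤ) =
      a ^ 2 + a * b + b ^ 2 := by
  set k : ℤ := a ^ 2 + a * b + b ^ 2 with hk
  have hk3 : 3 ≤ k := by nlinarith
  have hkne : k ≠ 0 := by omega
  set Λ : AddSubgroup (ℤ × ℤ) := AddSubgroup.closure {((a : ℤ), b), (-b, a + b)} with hΛ
  have hrange : (mulPi a b).range = Λ := by
    ext z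
    simp only [AddMonoidHom.mem_range, hΛ, AddSubgroup.mem_closure_pair]
    constructor
    · rintro ⟨⟨s, t⟩, rfl⟩
      exact ⟨s, t, by simp [mulPi, Prod.ext_iff]; constructor <;> ring⟩
    · rintro ⟨m, n, rfl⟩
      exact ⟨(m, n), by simp [mulPi, Prod.ext_iff]; constructor <;> ring⟩
  set P : AddSubgroup (ℤ × ℤ) := (AddSubgroup.zmultiples k).prod (AddSubgroup.zmultiples k)
    with hP
  have hPmem : ∀ z : ℤ × ℤ, z ∈ P ↔ (∃ m : ℤ, z.1 = k * m) ∧ ∃ n : ℤ, z.2 = k * n := by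
    intro z
    simp [hP, AddSubgroup.mem_prod, AddSubgroup.mem_zmultiples_iff, eq_comm, mul_comm]
  have hcomp : ∀ z : ℤ × ℤ, mulPi a b (mulPiBar a b z) = (k * z.1, k * z.2) := by
    rintro ⟨s, t⟩
    simp [mulPi, mulPiBar, Prod.ext_iff]
    constructor <;> ring
  have hcomap : P.comap (mulPi a b) = (mulPiBar a b).range := by
    ext ⟨s, t⟩
    simp only [AddSubgroup.mem_comap, hPmem, AddMonoidHom.mem_range]
    constructor
    · rintro ⟨⟨m, hm⟩, ⟨n, hn⟩⟩
      refine ⟨(m, n), ?_⟩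
      simp only [mulPi, mulPiBar, AddMonoidHom.mk'_apply] at hm hn ⊢
      have hs : k * ((a + b) * m + b * n) = k * s := by
        have : k * s = (a + b) * (a * s - b * t) + b * (b * s + (a + b) * t) := by ring
        rw [this, hm, hn]; ring
      have ht : k * (-b * m + a * n) = k * t := by
        have : k * t = a * (b * s + (a + b) * t) - b * (a * s - b * t) := by ring
        rw [this, hm, hn]; ring
      have hs' := mul_left_cancel₀ hkne hs
      have ht' := mul_left_cancel₀ hkne ht
      simp only [Prod.mk.injEq]
      exact ⟨by linarith, by linarith⟩
    · rintro ⟨z, hz⟩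
      rw [← hz, hcomp]
      exact ⟨⟨z.1, rfl⟩, ⟨z.2, rfl⟩⟩
  have hconj : ∀ z, mulPiBar a b (conjE z) = conjE (mulPi a b z) := by
    rintro ⟨s, t⟩
    simp [mulPi, mulPiBar, conjE, Prod.ext_iff]
    constructor <;> ring
  have hrange' : (mulPiBar a b).range = Λ.map conjE.toAddMonoidHom := by
    rw [← hrange]
    ext z
    simp only [AddMonoidHom.mem_range, AddSubgroup.mem_map]
    constructor
    · rintro ⟨w, rfl⟩
      refine ⟨mulPi a b (conjE.symm w), ⟨conjE.symm w, rfl⟩, ?_⟩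
      have h1 := hconj (conjE.symm w)
      rw [AddEquiv.apply_symm_apply] at h1
      rw [h1]; rfl
    · rintro ⟨y, ⟨w, rfl⟩, rfl⟩
      exact ⟨conjE w, by rw [hconj]; rfl⟩
  have hprod : ∀ (H K : AddSubgroup ℤ), (H.prod K).index = H.index * K.index := by
    intro H K
    simp_rw [AddSubgroup.index, ← Nat.card_prod]
    refine Nat.card_congr ((Quotient.congrRight (fun x y ↦ ?_)).trans
      (Setoid.prodQuotientEquiv _ _).symm)
    rw [Setoid.prod_apply]
    simp only [QuotientAddGroup.leftRel_apply, AddSubgroup.mem_prod, Prod.fst_add, Prod.snd_add,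
      Prod.fst_neg, Prod.snd_neg]
  have hPindex : P.index = k.natAbs * k.natAbs := by
    rw [hP, hprod, Int.index_zmultiples]
  have hPle : P ≤ Λ := by
    intro z hz
    rw [hPmem] at hz
    obtain ⟨⟨m, hm⟩, ⟨n, hn⟩⟩ := hz
    rw [← hrange]
    refine ⟨mulPiBar a b (m, n), ?_⟩
    rw [hcomp]
    simp [← hm, ← hn]
  have hmap_index : (Λ.map conjE.toAddMonoidHom).index = Λ.index := by
    have heq : Λ.map conjE.toAddMonoidHom = Λ.comap conjE.symm.toAddMonoidHom := by
      ext z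
      simp only [AddSubgroup.mem_map, AddSubgroup.mem_comap]
      constructor
      · rintro ⟨w, hw, rfl⟩
        simpa using hw
      · intro hz
        exact ⟨conjE.symm z, hz, by simp⟩
    rw [heq]
    exact AddSubgroup.index_comap_of_surjective _ conjE.symm.surjective
  have hrel : P.relIndex Λ = Λ.index := by
    have h1 := AddSubgroup.index_comap P (mulPi a b)
    rw [hcomap, hrange, hrange', hmap_index] at h1
    exact h1.symm
  have hmul := AddSubgroup.relIndex_mul_index hPle
  rw [hrel, hPindex] at hmul
  have : Λ.index = k.natAbs := by
    have := Nat.mul_self_inj.mp hmul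
    omega
  rw [this]
  simp [Int.natAbs_of_nonneg (by omega : (0:ℤ) ≤ k)]

end IndexAux

/-! ### Auxiliary material for the separation computation -/

section GeomAux

private lemma pt_e0 (x y : ℝ) : pt x y 0 = x := by simp [pt]
private lemma pt_e1 (x y : ℝ) : pt x y 1 = y := by simp [pt]

private lemma norm_pt (x y : ℝ) : ‖pt x y‖ = Real.sqrt (x ^ 2 + y ^ 2) := by
  rw [EuclideanSpace.norm_eq, Fin.sum_univ_two]
  simp [pt, sq_abs]

private lemma hsq3 : Real.sqrt 3 * Real.sqrt 3 = 3 :=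
  Real.mul_self_sqrt (by norm_num)

private lemma h34 : Real.sqrt (1 - (1/2:ℝ) ^ 2) = Real.sqrt 3 / 2 := by
  rw [show (1:ℝ) - (1/2) ^ 2 = (Real.sqrt 3 / 2) ^ 2 by
    linear_combination -(Real.sq_sqrt (by norm_num : (0:ℝ) ≤ 3)) / 4]
  exact Real.sqrt_sq (by positivity)

/-- The vertex set of the regular hexagon K(1/2). -/
private def hexVerts : Set Plane :=
  {pt 0 (1/2), pt (Real.sqrt 3 / 4) (1/4), pt (Real.sqrt 3 / 4) (-(1/4)), pt 0 (-(1/2)),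
    pt (-(Real.sqrt 3 / 4)) (-(1/4)), pt (-(Real.sqrt 3 / 4)) (1/4)}

private lemma hexK_half : hexK (1/2) = convexHull ℝ hexVerts := by
  unfold hexK hexVerts
  rw [show Real.sqrt (1 - (1/2:ℝ) ^ 2) / 2 = Real.sqrt 3 / 4 by rw [h34]; ring,
    show ((1:ℝ)/2)/2 = 1/4 by norm_num]

private lemma hex_norm_le {x : Plane} (hx : x ∈ hexK (1/2)) : ‖x‖ ≤ 1/2 := by
  rw [hexK_half] at hx
  have hsub : hexVerts ⊆ Metric.closedBall (0 : Plane) (1/2) := by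
    intro u hu
    rcases hu with rfl | rfl | rfl | rfl | rfl | rfl
    · rw [Metric.mem_closedBall, dist_zero_right, norm_pt,
        show (0:ℝ)^2 + (1/2)^2 = ((1:ℝ)/2)^2 by ring, Real.sqrt_sq (by norm_num)]
    · rw [Metric.mem_closedBall, dist_zero_right, norm_pt,
        show (Real.sqrt 3/4)^2 + ((1:ℝ)/4)^2 = ((1:ℝ)/2)^2 by linear_combination hsq3/16,
        Real.sqrt_sq (by norm_num)]
    · rw [Metric.mem_closedBall, dist_zero_right, norm_pt,
        show (Real.sqrt 3/4)^2 + (-((1:ℝ)/4))^2 = ((1:ℝ)/2)^2 by linear_combination hsq3/16,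
        Real.sqrt_sq (by norm_num)]
    · rw [Metric.mem_closedBall, dist_zero_right, norm_pt,
        show (0:ℝ)^2 + (-((1:ℝ)/2))^2 = ((1:ℝ)/2)^2 by ring, Real.sqrt_sq (by norm_num)]
    · rw [Metric.mem_closedBall, dist_zero_right, norm_pt,
        show (-(Real.sqrt 3/4))^2 + (-((1:ℝ)/4))^2 = ((1:ℝ)/2)^2 by linear_combination hsq3/16,
        Real.sqrt_sq (by norm_num)]
    · rw [Metric.mem_closedBall, dist_zero_right, norm_pt,
        show (-(Real.sqrt 3/4))^2 + ((1:ℝ)/4)^2 = ((1:ℝ)/2)^2 by linear_combination hsq3/16,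
        Real.sqrt_sq (by norm_num)]
  have := convexHull_min hsub (convex_closedBall _ _) hx
  simpa [Metric.mem_closedBall, dist_zero_right] using this

private lemma pt_add (x y u v : ℝ) : pt x y + pt u v = pt (x + u) (y + v) := by
  ext i
  fin_cases i <;> simp [pt]

private lemma pt_sub (x y u v : ℝ) : pt x y - pt u v = pt (x - u) (y - v) := by
  ext i
  fin_cases i <;> simp [pt]

/-- Linear functionals are bounded on a convex hull by their bounds on the generators. -/
private lemma hull_le (V : Set Plane) (c1 c2 cb : ℝ)
    (h : ∀ u ∈ V, c1 * u 0 + c2 * u 1 ≤ cb) :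
    ∀ x ∈ convexHull ℝ V, c1 * x 0 + c2 * x 1 ≤ cb := by
  intro x hx
  have hconv : Convex ℝ {w : Plane | c1 * w 0 + c2 * w 1 ≤ cb} := by
    apply convex_halfSpace_le
    constructor
    · intro p q; simp; ring
    · intro r p; simp; ring
  exact convexHull_min h hconv hx

/-- The key geometric estimate: if the supporting-functional conditions hold at `v`, then any
point of `w + K - K` is at distance at least `‖w − v‖` from the origin. -/
private lemma key (v1 v2 w1 w2 c : ℝ) {p q z : Plane}
    (hp : p ∈ convexHull ℝ hexVerts) (hq : q ∈ convexHull ℝ hexVerts)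
    (hz : z = pt w1 w2 + p - q)
    (hbound : ∀ u ∈ hexVerts, |(w1 - v1) * u 0 + (w2 - v2) * u 1| ≤ c)
    (hvc : 2 * c ≤ (w1 - v1) * v1 + (w2 - v2) * v2) :
    Real.sqrt ((w1 - v1) ^ 2 + (w2 - v2) ^ 2) ≤ ‖z‖ := by
  have hup := hull_le hexVerts (w1 - v1) (w2 - v2) c
    (fun u hu => (abs_le.mp (hbound u hu)).2) q hq
  have hlo := hull_le hexVerts (-(w1 - v1)) (-(w2 - v2)) c
    (fun u hu => by have := (abs_le.mp (hbound u hu)).1; linarith) p hp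
  have hnorm : ‖z‖ = Real.sqrt ((w1 + p 0 - q 0) ^ 2 + (w2 + p 1 - q 1) ^ 2) := by
    rw [hz, EuclideanSpace.norm_eq, Fin.sum_univ_two]
    simp [pt, sq_abs]
  rw [hnorm]
  apply Real.sqrt_le_sqrt
  nlinarith [sq_nonneg (v1 + p 0 - q 0), sq_nonneg (v2 + p 1 - q 1)]

/-- Inner products of a functional with hexagon vertices, reduced to rational data. -/
private lemma vert_bound (n1 n2 c : ℝ)
    (H1 : |n2 / 2| ≤ c) (H2 : |3 * n1 / 4 + n2 / 4| ≤ c) (H3 : |3 * n1 / 4 - n2 / 4| ≤ c) :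
    ∀ u ∈ hexVerts, |(n1 * Real.sqrt 3) * u 0 + n2 * u 1| ≤ c := by
  intro u hu
  rcases hu with rfl | rfl | rfl | rfl | rfl | rfl <;>
    rw [pt_e0, pt_e1]
  · convert H1 using 2; ring
  · rw [show n1 * Real.sqrt 3 * (Real.sqrt 3 / 4) + n2 * (1/4) = 3 * n1 / 4 + n2 / 4 by
      linear_combination (n1 / 4) * hsq3]
    exact H2
  · rw [show n1 * Real.sqrt 3 * (Real.sqrt 3 / 4) + n2 * -(1/4) = 3 * n1 / 4 - n2 / 4 by
      linear_combination (n1 / 4) * hsq3]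
    exact H3
  · rw [show n1 * Real.sqrt 3 * 0 + n2 * -(1/2) = -(n2 / 2) by ring, abs_neg]
    exact H1
  · rw [show n1 * Real.sqrt 3 * -(Real.sqrt 3 / 4) + n2 * -(1/4)
        = -(3 * n1 / 4 + n2 / 4) by linear_combination (-n1 / 4) * hsq3, abs_neg]
    exact H2
  · rw [show n1 * Real.sqrt 3 * -(Real.sqrt 3 / 4) + n2 * (1/4)
        = -(3 * n1 / 4 - n2 / 4) by linear_combination (-n1 / 4) * hsq3, abs_neg]
    exact H3

private lemma center_sub (i j i' j' : ℤ) :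
    center (1/2) i j - center (1/2) i' j' =
      pt ((2 * ((i:ℝ) - (i':ℝ)) + ((j:ℝ) - (j':ℝ))) * (Real.sqrt 3 / 4))
        (((j:ℝ) - (j':ℝ)) * (3/4)) := by
  rw [center, center, pt_sub]
  congr 1
  · rw [h34]; push_cast; ring
  · push_cast; ring

end GeomAux

set_option maxHeartbeats 2000000 in
/-- for integers a ≥ b ≥ 1 and k = a² + ab + b², with r = 1/2 (regular
hexagons of unit diameter) and Λ = ⟨(a, b), (−b, a + b)⟩ ≤ ℤ² of index k, the separation
of the induced k-colouring equals √((3a + 3b − 4)² + 3(a − b)²) / 4. -/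
theorem statement7 (a b : ℤ) (hb : 1 ≤ b) (hab : b ≤ a) :
    ((AddSubgroup.closure {((a : ℤ), b), (-b, a + b)} : AddSubgroup (ℤ × ℤ)).index : ℤ) =
      a ^ 2 + a * b + b ^ 2 ∧
    IsGLB
      (sameColourDists (1 / 2) (AddSubgroup.closure {((a : ℤ), b), (-b, a + b)}))
      (Real.sqrt ((3 * (a : ℝ) + 3 * (b : ℝ) - 4) ^ 2 + 3 * ((a : ℝ) - (b : ℝ)) ^ 2) / 4) := by
  have haR : (1:ℝ) ≤ (a:ℝ) := by exact_mod_cast le_trans hb hab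
  have hbR : (1:ℝ) ≤ (b:ℝ) := by exact_mod_cast hb
  refine ⟨index_eq a b hb hab, ?_⟩
  set T : ℝ := (3 * (a : ℝ) + 3 * (b : ℝ) - 4) ^ 2 + 3 * ((a : ℝ) - (b : ℝ)) ^ 2 with hT
  have hT0 : 0 ≤ T := by positivity
  set d : ℝ := Real.sqrt T / 4 with hd
  have hs16 : Real.sqrt (T / 16) = d := by
    rw [hd, show T / 16 = (Real.sqrt T / 4) ^ 2 by rw [div_pow, Real.sq_sqrt hT0]; norm_num]
    exact Real.sqrt_sq (by positivity)
  apply IsLeast.isGLB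
  constructor
  · -- d is attained
    refine ⟨-b, a + b, 0, 0, center (1/2) (-b) (a+b) + pt 0 (-(1/2)),
      center (1/2) 0 0 + pt 0 (1/2), ?_, ?_, ?_, ?_, ?_⟩
    · simp only [ne_eq, Prod.mk.injEq, not_and]
      intro h1 h2
      omega
    · simp only [sub_zero]
      exact AddSubgroup.subset_closure (Set.mem_insert_of_mem _ rfl)
    · exact ⟨pt 0 (-(1/2)), subset_convexHull ℝ _ (by
        simp only [Set.mem_insert_iff, Set.mem_singleton_iff]; tauto), rfl⟩
    · exact ⟨pt 0 (1/2), subset_convexHull ℝ _ (Set.mem_insert _ _), rfl⟩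
    · rw [dist_eq_norm]
      have hdiff : (center (1/2) (-b) (a+b) + pt 0 (-(1/2))) - (center (1/2) 0 0 + pt 0 (1/2))
          = pt (((a:ℝ) - (b:ℝ)) * (Real.sqrt 3 / 4)) ((3*(a:ℝ) + 3*(b:ℝ) - 4)/4) := by
        rw [show (center (1/2) (-b) (a+b) + pt 0 (-(1/2))) - (center (1/2) 0 0 + pt 0 (1/2))
            = (center (1/2) (-b) (a+b) - center (1/2) 0 0) + (pt 0 (-(1/2)) - pt 0 (1/2))
            from by abel, center_sub, pt_sub, pt_add]
        congr 1 <;> push_cast <;> ring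
      rw [hdiff, norm_pt,
        show (((a:ℝ) - (b:ℝ)) * (Real.sqrt 3 / 4)) ^ 2 + ((3*(a:ℝ) + 3*(b:ℝ) - 4)/4) ^ 2
          = T / 16 by rw [hT]; linear_combination (((a:ℝ) - (b:ℝ))^2 / 16) * hsq3, hs16]
  · -- d is a lower bound
    rintro x ⟨i, j, i', j', p, q, hne, hmem, hp, hq, rfl⟩
    obtain ⟨ph, hph0, rfl⟩ := hp
    obtain ⟨qh, hqh0, rfl⟩ := hq
    have hph : ph ∈ convexHull ℝ hexVerts := by rwa [← hexK_half]
    have hqh : qh ∈ convexHull ℝ hexVerts := by rwa [← hexK_half]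
    obtain ⟨u, v, huv⟩ := (AddSubgroup.mem_closure_pair).mp hmem
    have hm : u * a + v * (-b) = i - i' := by
      have := congrArg Prod.fst huv
      simpa [smul_eq_mul] using this
    have hn : u * b + v * (a + b) = j - j' := by
      have := congrArg Prod.snd huv
      simpa [smul_eq_mul] using this
    have huv0 : ¬(u = 0 ∧ v = 0) := by
      rintro ⟨rfl, rfl⟩
      simp only [zero_mul, add_zero, mul_neg, zero_add] at hm hn
      apply hne
      have h1 : i = i' := by omega
      have h2 : j = j' := by omega
      rw [h1, h2]
    rw [dist_eq_norm]
    have hz : (center (1/2) i j + ph) - (center (1/2) i' j' + qh)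
        = pt ((2 * ((i:ℝ) - (i':ℝ)) + ((j:ℝ) - (j':ℝ))) * (Real.sqrt 3 / 4))
            (((j:ℝ) - (j':ℝ)) * (3/4)) + ph - qh := by
      rw [show (center (1/2) i j + ph) - (center (1/2) i' j' + qh)
          = (center (1/2) i j - center (1/2) i' j') + ph - qh from by abel, center_sub]
    have main : ∀ w1 w2 v1 v2 c : ℝ,
        (pt ((2 * ((i:ℝ) - (i':ℝ)) + ((j:ℝ) - (j':ℝ))) * (Real.sqrt 3 / 4))
          (((j:ℝ) - (j':ℝ)) * (3/4)) : Plane) = pt w1 w2 →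
        (∀ vt ∈ hexVerts, |(w1 - v1) * vt 0 + (w2 - v2) * vt 1| ≤ c) →
        2 * c ≤ (w1 - v1) * v1 + (w2 - v2) * v2 →
        (w1 - v1) ^ 2 + (w2 - v2) ^ 2 = T / 16 →
        d ≤ ‖(center (1/2) i j + ph) - (center (1/2) i' j' + qh)‖ := by
      intro w1 w2 v1 v2 c hW hbd hvc heq
      have hz' : (center (1/2) i j + ph) - (center (1/2) i' j' + qh) = pt w1 w2 + ph - qh := by
        rw [hz, hW]
      calc d = Real.sqrt ((w1 - v1) ^ 2 + (w2 - v2) ^ 2) := by rw [heq, hs16]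
        _ ≤ _ := key v1 v2 w1 w2 c hph hqh hz' hbd hvc
    have hcase : (u = 1 ∧ v = 0) ∨ (u = -1 ∧ v = 0) ∨ (u = 0 ∧ v = 1) ∨ (u = 0 ∧ v = -1)
        ∨ (u = -1 ∧ v = 1) ∨ (u = 1 ∧ v = -1) ∨ 3 ≤ u^2 + u*v + v^2 := by
      by_cases h3 : 3 ≤ u^2 + u*v + v^2
      · tauto
      · push_neg at h3
        have h4 : (2*u + v)^2 + 3*v^2 ≤ 8 := by nlinarith
        have hx8 : (2*u + v)^2 ≤ 8 := by linarith [sq_nonneg v]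
        have hv8 : v^2 ≤ 2 := by linarith [sq_nonneg (2*u + v)]
        have hx1 : -2 ≤ 2*u + v := by linarith [hx8, sq_nonneg (2*u + v + 3)]
        have hx2 : 2*u + v ≤ 2 := by linarith [hx8, sq_nonneg (2*u + v - 3)]
        have hv1 : -1 ≤ v := by linarith [hv8, sq_nonneg (v + 2)]
        have hv2 : v ≤ 1 := by linarith [hv8, sq_nonneg (v - 2)]
        have hu1 : -1 ≤ u := by omega
        have hu2 : u ≤ 1 := by omega
        interval_cases u <;> interval_cases v <;> revert h3 huv0 <;> norm_num
        all_goals omega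
    have hmR : (u:ℝ) * a + v * (-(b:ℝ)) = (i:ℝ) - (i':ℝ) := by exact_mod_cast hm
    have hnR : (u:ℝ) * b + v * ((a:ℝ) + b) = (j:ℝ) - (j':ℝ) := by exact_mod_cast hn
    rcases hcase with ⟨hu, hv⟩ | ⟨hu, hv⟩ | ⟨hu, hv⟩ | ⟨hu, hv⟩ | ⟨hu, hv⟩ | ⟨hu, hv⟩ | hN3
    -- Case (1,0): (m,n) = (a,b), nearest vertex (√3/2, 1/2)
    · subst hu; subst hv
      refine main ((2*(a:ℝ)+(b:ℝ))/4 * Real.sqrt 3) (3*(b:ℝ)/4)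
        ((1:ℝ)/2 * Real.sqrt 3) (1/2) ((3*(a:ℝ)+3*(b:ℝ)-4)/8) ?_ ?_ ?_ ?_
      · rw [← hmR, ← hnR]; congr 1 <;> push_cast <;> ring
      · intro vt hvt
        rw [show (2*(a:ℝ)+(b:ℝ))/4 * Real.sqrt 3 - (1:ℝ)/2 * Real.sqrt 3
              = ((2*(a:ℝ)+(b:ℝ)-2)/4) * Real.sqrt 3 by ring,
            show (3*(b:ℝ)/4 : ℝ) - 1/2 = (3*(b:ℝ)-2)/4 by ring]
        refine vert_bound _ _ _ ?_ ?_ ?_ vt hvt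
        · rw [abs_le]; constructor <;> linarith
        · rw [abs_le]; constructor <;> linarith
        · rw [abs_le]; constructor <;> linarith
      · exact le_of_eq (by linear_combination (-(2*(a:ℝ)+(b:ℝ)-2)/8) * hsq3)
      · rw [hT]
        linear_combination ((2*(a:ℝ)+(b:ℝ)-2)^2/16) * hsq3
    -- Case (-1,0)
    · subst hu; subst hv
      refine main (-((2*(a:ℝ)+(b:ℝ))/4) * Real.sqrt 3) (-(3*(b:ℝ)/4))
        (-((1:ℝ)/2) * Real.sqrt 3) (-(1/2)) ((3*(a:ℝ)+3*(b:ℝ)-4)/8) ?_ ?_ ?_ ?_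
      · rw [← hmR, ← hnR]; congr 1 <;> push_cast <;> ring
      · intro vt hvt
        rw [show -((2*(a:ℝ)+(b:ℝ))/4) * Real.sqrt 3 - (-((1:ℝ)/2) * Real.sqrt 3)
              = (-((2*(a:ℝ)+(b:ℝ)-2)/4)) * Real.sqrt 3 by ring,
            show (-(3*(b:ℝ)/4) : ℝ) - (-(1/2)) = -((3*(b:ℝ)-2)/4) by ring]
        refine vert_bound _ _ _ ?_ ?_ ?_ vt hvt
        · rw [abs_le]; constructor <;> linarith
        · rw [abs_le]; constructor <;> linarith
        · rw [abs_le]; constructor <;> linarith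
      · exact le_of_eq (by linear_combination (-(2*(a:ℝ)+(b:ℝ)-2)/8) * hsq3)
      · rw [hT]
        linear_combination ((2*(a:ℝ)+(b:ℝ)-2)^2/16) * hsq3
    -- Case (0,1): (m,n) = (-b, a+b), nearest vertex (0,1)
    · subst hu; subst hv
      refine main (((a:ℝ)-(b:ℝ))/4 * Real.sqrt 3) (3*((a:ℝ)+(b:ℝ))/4)
        (0 * Real.sqrt 3) 1 ((3*(a:ℝ)+3*(b:ℝ)-4)/8) ?_ ?_ ?_ ?_
      · rw [← hmR, ← hnR]; congr 1 <;> push_cast <;> ring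
      · intro vt hvt
        rw [show ((a:ℝ)-(b:ℝ))/4 * Real.sqrt 3 - 0 * Real.sqrt 3
              = (((a:ℝ)-(b:ℝ))/4) * Real.sqrt 3 by ring,
            show (3*((a:ℝ)+(b:ℝ))/4 : ℝ) - 1 = (3*(a:ℝ)+3*(b:ℝ)-4)/4 by ring]
        refine vert_bound _ _ _ ?_ ?_ ?_ vt hvt
        · rw [abs_le]; constructor <;> linarith
        · rw [abs_le]; constructor <;> linarith
        · rw [abs_le]; constructor <;> linarith
      · exact le_of_eq (by ring)
      · rw [hT]
        linear_combination (((a:ℝ)-(b:ℝ))^2/16) * hsq3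
    -- Case (0,-1)
    · subst hu; subst hv
      refine main (-(((a:ℝ)-(b:ℝ))/4) * Real.sqrt 3) (-(3*((a:ℝ)+(b:ℝ))/4))
        (0 * Real.sqrt 3) (-1) ((3*(a:ℝ)+3*(b:ℝ)-4)/8) ?_ ?_ ?_ ?_
      · rw [← hmR, ← hnR]; congr 1 <;> push_cast <;> ring
      · intro vt hvt
        rw [show -(((a:ℝ)-(b:ℝ))/4) * Real.sqrt 3 - 0 * Real.sqrt 3
              = (-(((a:ℝ)-(b:ℝ))/4)) * Real.sqrt 3 by ring,
            show (-(3*((a:ℝ)+(b:ℝ))/4) : ℝ) - (-1) = -((3*(a:ℝ)+3*(b:ℝ)-4)/4) by ring]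
        refine vert_bound _ _ _ ?_ ?_ ?_ vt hvt
        · rw [abs_le]; constructor <;> linarith
        · rw [abs_le]; constructor <;> linarith
        · rw [abs_le]; constructor <;> linarith
      · exact le_of_eq (by ring)
      · rw [hT]
        linear_combination (((a:ℝ)-(b:ℝ))^2/16) * hsq3
    -- Case (-1,1): (m,n) = (-a-b, a), nearest vertex (-√3/2, 1/2)
    · subst hu; subst hv
      refine main (-(((a:ℝ)+2*(b:ℝ))/4) * Real.sqrt 3) (3*(a:ℝ)/4)
        (-((1:ℝ)/2) * Real.sqrt 3) (1/2) ((3*(a:ℝ)+3*(b:ℝ)-4)/8) ?_ ?_ ?_ ?_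
      · rw [← hmR, ← hnR]; congr 1 <;> push_cast <;> ring
      · intro vt hvt
        rw [show -(((a:ℝ)+2*(b:ℝ))/4) * Real.sqrt 3 - (-((1:ℝ)/2) * Real.sqrt 3)
              = (-(((a:ℝ)+2*(b:ℝ)-2)/4)) * Real.sqrt 3 by ring,
            show (3*(a:ℝ)/4 : ℝ) - 1/2 = (3*(a:ℝ)-2)/4 by ring]
        refine vert_bound _ _ _ ?_ ?_ ?_ vt hvt
        · rw [abs_le]; constructor <;> linarith
        · rw [abs_le]; constructor <;> linarith
        · rw [abs_le]; constructor <;> linarith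
      · exact le_of_eq (by linear_combination (-((a:ℝ)+2*(b:ℝ)-2)/8) * hsq3)
      · rw [hT]
        linear_combination (((a:ℝ)+2*(b:ℝ)-2)^2/16) * hsq3
    -- Case (1,-1): (m,n) = (a+b, -a), nearest vertex (√3/2, -1/2)
    · subst hu; subst hv
      refine main ((((a:ℝ)+2*(b:ℝ))/4) * Real.sqrt 3) (-(3*(a:ℝ)/4))
        (((1:ℝ)/2) * Real.sqrt 3) (-(1/2)) ((3*(a:ℝ)+3*(b:ℝ)-4)/8) ?_ ?_ ?_ ?_
      · rw [← hmR, ← hnR]; congr 1 <;> push_cast <;> ring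
      · intro vt hvt
        rw [show (((a:ℝ)+2*(b:ℝ))/4) * Real.sqrt 3 - (((1:ℝ)/2) * Real.sqrt 3)
              = ((((a:ℝ)+2*(b:ℝ)-2)/4)) * Real.sqrt 3 by ring,
            show (-(3*(a:ℝ)/4) : ℝ) - (-(1/2)) = -((3*(a:ℝ)-2)/4) by ring]
        refine vert_bound _ _ _ ?_ ?_ ?_ vt hvt
        · rw [abs_le]; constructor <;> linarith
        · rw [abs_le]; constructor <;> linarith
        · rw [abs_le]; constructor <;> linarith
      · exact le_of_eq (by linear_combination (-((a:ℝ)+2*(b:ℝ)-2)/8) * hsq3)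
      · rw [hT]
        linear_combination (((a:ℝ)+2*(b:ℝ)-2)^2/16) * hsq3
    -- Case N ≥ 3: use the crude norm bound
    · set W1 : ℝ := (2 * ((i:ℝ) - (i':ℝ)) + ((j:ℝ) - (j':ℝ))) * (Real.sqrt 3 / 4) with hW1
      set W2 : ℝ := ((j:ℝ) - (j':ℝ)) * (3/4) with hW2
      have hNR : (3:ℝ) ≤ (u:ℝ)^2 + (u:ℝ)*(v:ℝ) + (v:ℝ)^2 := by exact_mod_cast hN3
      have hkR : (3:ℝ) ≤ (a:ℝ)^2 + (a:ℝ)*(b:ℝ) + (b:ℝ)^2 := by nlinarith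
      have hkN : ((i:ℝ)-(i':ℝ))^2 + ((i:ℝ)-(i':ℝ))*((j:ℝ)-(j':ℝ)) + ((j:ℝ)-(j':ℝ))^2
          = ((a:ℝ)^2 + (a:ℝ)*(b:ℝ) + (b:ℝ)^2) * ((u:ℝ)^2 + (u:ℝ)*(v:ℝ) + (v:ℝ)^2) := by
        rw [← hmR, ← hnR]; ring
      have hR : W1^2 + W2^2
          = (3/4) * (((a:ℝ)^2 + (a:ℝ)*(b:ℝ) + (b:ℝ)^2) * ((u:ℝ)^2 + (u:ℝ)*(v:ℝ) + (v:ℝ)^2)) := by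
        rw [hW1, hW2]
        linear_combination ((2*((i:ℝ)-(i':ℝ)) + ((j:ℝ)-(j':ℝ)))^2/16) * hsq3 + (3/4) * hkN
      have hnorm1 : ‖pt W1 W2‖ - 1 ≤ ‖(center (1/2) i j + ph) - (center (1/2) i' j' + qh)‖ := by
        have h1 : ‖ph‖ ≤ 1/2 := hex_norm_le hph0
        have h2 : ‖qh‖ ≤ 1/2 := hex_norm_le hqh0
        have h3 : (pt W1 W2 : Plane)
            = ((center (1/2) i j + ph) - (center (1/2) i' j' + qh)) - (ph - qh) := by
          rw [hz]; abel
        have h4 := norm_sub_le ((center (1/2) i j + ph) - (center (1/2) i' j' + qh)) (ph - qh)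
        have h5 := norm_sub_le ph qh
        rw [← h3] at h4
        linarith
      have hd2 : d^2 = T/16 := by rw [hd, div_pow, Real.sq_sqrt hT0]; norm_num
      have hd0 : 0 ≤ d := by rw [hd]; positivity
      have habR : (2:ℝ) ≤ (a:ℝ) + (b:ℝ) := by linarith
      have hsT : Real.sqrt T ≤ 3*((a:ℝ)^2 + (a:ℝ)*(b:ℝ) + (b:ℝ)^2) + 3*((a:ℝ)+(b:ℝ)) - 4 := by
        have h1 : T ≤ (3*((a:ℝ)^2 + (a:ℝ)*(b:ℝ) + (b:ℝ)^2) + 3*((a:ℝ)+(b:ℝ)) - 4)^2 := by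
          rw [hT]; nlinarith
        calc Real.sqrt T
            ≤ Real.sqrt ((3*((a:ℝ)^2 + (a:ℝ)*(b:ℝ) + (b:ℝ)^2) + 3*((a:ℝ)+(b:ℝ)) - 4)^2) :=
              Real.sqrt_le_sqrt h1
          _ = _ := Real.sqrt_sq (by nlinarith)
      have hfin : (d + 1)^2 ≤ W1^2 + W2^2 := by
        have h2d : 2*d ≤ (3*((a:ℝ)^2 + (a:ℝ)*(b:ℝ) + (b:ℝ)^2) + 3*((a:ℝ)+(b:ℝ)) - 4)/2 := by
          rw [hd]; linarith
        have hRlb : (9/4) * ((a:ℝ)^2 + (a:ℝ)*(b:ℝ) + (b:ℝ)^2) ≤ W1^2 + W2^2 := by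
          rw [hR]; nlinarith
        have hTval : T = 12*((a:ℝ)^2 + (a:ℝ)*(b:ℝ) + (b:ℝ)^2) - 24*((a:ℝ)+(b:ℝ)) + 16 := by
          rw [hT]; ring
        nlinarith [hd2]
      have hle : d + 1 ≤ ‖pt W1 W2‖ := by
        have h1 := Real.sqrt_le_sqrt hfin
        rw [Real.sqrt_sq (by positivity)] at h1
        rw [norm_pt]
        exact h1
      linarith
end

section
/- Take r = 3/8 (so x = √55/16, y = 3/16) and let Λ be the subgroup of ℤ² generated by (4, −3) and (1, 3), which has index 15 in ℤ². Then the separation of the induced 15-colouring of the tiles T(i, j) equals √(153/32), and this value is attained. -/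
section Aux

lemma pt_zero (a b : ℝ) : pt a b 0 = a := rfl
lemma pt_one (a b : ℝ) : pt a b 1 = b := rfl

lemma plane_dist (x y : Plane) : dist x y = Real.sqrt ((x 0 - y 0)^2 + (x 1 - y 1)^2) := by
  rw [EuclideanSpace.dist_eq, Fin.sum_univ_two, Real.dist_eq, Real.dist_eq, sq_abs, sq_abs]

lemma sq_add_lb' (c w b k : ℝ) (hw : |w| ≤ b) (hk : 0 ≤ k) (hc : k + b ≤ |c|) :
    k^2 ≤ (c + w)^2 := by
  have h1 : k ≤ |c + w| := by
    have h2 := abs_sub_abs_le_abs_sub c (-w)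
    simp only [abs_neg, sub_neg_eq_add] at h2
    linarith
  calc k^2 ≤ |c + w|^2 := pow_le_pow_left₀ hk h1 2
    _ = (c + w)^2 := sq_abs _

lemma core (X w1 w2 : ℝ) (hX2 : X^2 = 55/256) (hX : 0 < X)
    (h1 : |w1| ≤ 2*X) (h3 : 5/16 * |w1| + X * |w2| ≤ X) :
    153/32 ≤ (5*X + w1)^2 + (33/16 + w2)^2 := by
  obtain ⟨h1a, h1b⟩ := abs_le.mp h1
  have hw1 : -X ≤ 5/16 * w1 + X * w2 := by
    have a1 : -|w1| ≤ w1 := neg_abs_le w1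
    have a2 : X * (-|w2|) ≤ X * w2 := mul_le_mul_of_nonneg_left (neg_abs_le w2) hX.le
    nlinarith [h3]
  have hid : X * ((5*X + w1)^2 + (33/16 + w2)^2 - 153/32)
      = X*(w1 + 2*X)^2 + X*(w2 + 3/8)^2 + 6*(55/256)*(w1 + 2*X) + (27/8)*(X*(w2 + 3/8)) := by
    linear_combination (6*w1 + 21*X) * hX2
  have h7 : -(5/16)*(w1 + 2*X) ≤ X*(w2 + 3/8) := by nlinarith [hw1]
  have hA : 0 ≤ w1 + 2*X := by linarith
  have hD : 0 ≤ X * ((5*X + w1)^2 + (33/16 + w2)^2 - 153/32) := by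
    rw [hid]
    nlinarith [mul_nonneg hX.le (sq_nonneg (w1 + 2*X)), mul_nonneg hX.le (sq_nonneg (w2 + 3/8))]
  have := nonneg_of_mul_nonneg_right hD hX
  linarith

lemma master (X w1 w2 : ℝ) (s t : ℤ) (hX2 : X^2 = 55/256) (hX : 0 < X)
    (h1 : |w1| ≤ 2*X) (h2 : |w2| ≤ 1) (h3 : 5/16 * |w1| + X * |w2| ≤ X)
    (hpar : Even (s - t)) (hne : ¬(s = 0 ∧ t = 0)) :
    153/32 ≤ (5*(s:ℝ)*X + w1)^2 + (33/16*(t:ℝ) + w2)^2 := by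
  have habsX : ∀ u : ℤ, |5*(u:ℝ)*X| = 5 * |(u:ℝ)| * X := by
    intro u
    rw [abs_mul, abs_mul, abs_of_pos hX, abs_of_nonneg (by norm_num : (0:ℝ) ≤ 5)]
  by_cases ht0 : t = 0
  · subst ht0
    have hs0 : s ≠ 0 := fun h => hne ⟨h, rfl⟩
    obtain ⟨k, hk⟩ := hpar
    have hs2 : 2 ≤ |s| := by rcases abs_cases s with ⟨h, _⟩ | ⟨h, _⟩ <;> omega
    have hs2' : (2:ℝ) ≤ |(s:ℝ)| := by rw [← Int.cast_abs]; exact_mod_cast hs2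
    have hc : 8*X + 2*X ≤ |5*(s:ℝ)*X| := by rw [habsX]; nlinarith
    have h := sq_add_lb' (5*(s:ℝ)*X) w1 (2*X) (8*X) h1 (by positivity) hc
    have h2' := sq_nonneg (33/16*((0:ℤ):ℝ) + w2)
    nlinarith [h, hX2]
  · by_cases ht1 : t = 1 ∨ t = -1
    · have hsodd : Odd s := by
        rcases hpar with ⟨k, hk⟩
        rcases ht1 with rfl | rfl
        · exact ⟨k, by omega⟩
        · exact ⟨k - 1, by omega⟩
      by_cases hs1 : s = 1 ∨ s = -1
      · have key : ∀ w1' w2' : ℝ, |w1'| = |w1| → |w2'| = |w2| →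
            (5*(s:ℝ)*X + w1)^2 + (33/16*(t:ℝ) + w2)^2 = (5*X + w1')^2 + (33/16 + w2')^2 →
            153/32 ≤ (5*(s:ℝ)*X + w1)^2 + (33/16*(t:ℝ) + w2)^2 := by
          intro w1' w2' e1 e2 e3
          rw [e3]
          exact core X w1' w2' hX2 hX (e1 ▸ h1) (by rw [e1, e2]; exact h3)
        rcases hs1 with rfl | rfl <;> rcases ht1 with rfl | rfl
        · exact key w1 w2 rfl rfl (by push_cast; ring)
        · exact key w1 (-w2) rfl (abs_neg w2) (by push_cast; ring)
        · exact key (-w1) w2 (abs_neg w1) rfl (by push_cast; ring)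
        · exact key (-w1) (-w2) (abs_neg w1) (abs_neg w2) (by push_cast; ring)
      · have hs3 : 3 ≤ |s| := by
          rcases hsodd with ⟨k, hk⟩
          rcases abs_cases s with ⟨h, _⟩ | ⟨h, _⟩ <;> omega
        have hs3' : (3:ℝ) ≤ |(s:ℝ)| := by rw [← Int.cast_abs]; exact_mod_cast hs3
        have hc : 13*X + 2*X ≤ |5*(s:ℝ)*X| := by rw [habsX]; nlinarith
        have h := sq_add_lb' (5*(s:ℝ)*X) w1 (2*X) (13*X) h1 (by positivity) hc
        nlinarith [h, hX2, sq_nonneg (33/16*(t:ℝ) + w2)]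
    · have ht2 : 2 ≤ |t| := by
        push_neg at ht1
        rcases abs_cases t with ⟨h, _⟩ | ⟨h, _⟩ <;> omega
      have ht2' : (2:ℝ) ≤ |(t:ℝ)| := by rw [← Int.cast_abs]; exact_mod_cast ht2
      have hc : 25/8 + 1 ≤ |33/16*(t:ℝ)| := by
        rw [abs_mul, abs_of_nonneg (by norm_num : (0:ℝ) ≤ 33/16)]
        nlinarith
      have h := sq_add_lb' (33/16*(t:ℝ)) w2 1 (25/8) h2 (by norm_num) hc
      nlinarith [h, sq_nonneg (5*(s:ℝ)*X + w1)]

lemma hex_halfspace (X a b c : ℝ) (hXdef : Real.sqrt (1 - (3/8:ℝ) ^ 2) / 2 = X)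
    (h1 : b * (1/2) ≤ c)
    (h2 : a * X + b * (3/16) ≤ c)
    (h3 : a * X - b * (3/16) ≤ c)
    (h4 : -(b * (1/2)) ≤ c)
    (h5 : -(a * X) - b * (3/16) ≤ c)
    (h6 : -(a * X) + b * (3/16) ≤ c) :
    ∀ p ∈ hexK (3/8), a * p 0 + b * p 1 ≤ c := by
  intro p hp
  have hlin : IsLinearMap ℝ (fun q : Plane => a * q 0 + b * q 1) := by
    constructor
    · intro q r; show a * (q + r) 0 + b * (q + r) 1 = _; simp; ring
    · intro m q; show a * (m • q) 0 + b * (m • q) 1 = _; simp; ring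
  refine convexHull_min ?_ (convex_halfSpace_le hlin c) hp
  intro v hv
  simp only [Set.mem_insert_iff, Set.mem_singleton_iff] at hv
  rcases hv with rfl | rfl | rfl | rfl | rfl | rfl <;>
    simp only [Set.mem_setOf_eq, pt_zero, pt_one, hXdef] <;> nlinarith []

set_option maxHeartbeats 4000000 in
lemma hex_bounds (X : ℝ) (hXdef : Real.sqrt (1 - (3/8:ℝ) ^ 2) / 2 = X) (hX : 0 < X)
    {p : Plane} (hp : p ∈ hexK (3/8)) :
    |p 0| ≤ X ∧ |p 1| ≤ 1/2 ∧ 5/16 * |p 0| + X * |p 1| ≤ X/2 := by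
  have b1 := hex_halfspace X 1 0 X hXdef (by linarith) (by linarith) (by linarith)
    (by linarith) (by linarith) (by linarith) p hp
  have b2 := hex_halfspace X (-1) 0 X hXdef (by linarith) (by linarith) (by linarith)
    (by linarith) (by linarith) (by linarith) p hp
  have b3 := hex_halfspace X 0 1 (1/2) hXdef (by linarith) (by linarith) (by linarith)
    (by linarith) (by linarith) (by linarith) p hp
  have b4 := hex_halfspace X 0 (-1) (1/2) hXdef (by linarith) (by linarith) (by linarith)
    (by linarith) (by linarith) (by linarith) p hp
  have s1 := hex_halfspace X (5/16) X (X/2) hXdef (by linarith) (by nlinarith) (by nlinarith)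
    (by linarith) (by nlinarith) (by nlinarith) p hp
  have s2 := hex_halfspace X (5/16) (-X) (X/2) hXdef (by linarith) (by nlinarith) (by nlinarith)
    (by linarith) (by nlinarith) (by nlinarith) p hp
  have s3 := hex_halfspace X (-(5/16)) X (X/2) hXdef (by linarith) (by nlinarith) (by nlinarith)
    (by linarith) (by nlinarith) (by nlinarith) p hp
  have s4 := hex_halfspace X (-(5/16)) (-X) (X/2) hXdef (by linarith) (by nlinarith) (by nlinarith)
    (by linarith) (by nlinarith) (by nlinarith) p hp
  refine ⟨abs_le.mpr ⟨by linarith, by linarith⟩, abs_le.mpr ⟨by linarith, by linarith⟩, ?_⟩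
  rcases abs_cases (p 0) with ⟨e0, _⟩ | ⟨e0, _⟩ <;> rcases abs_cases (p 1) with ⟨e1, _⟩ | ⟨e1, _⟩ <;>
    rw [e0, e1] <;> nlinarith [s1, s2, s3, s4]

def phi15 : ℤ × ℤ →+ ZMod 15 where
  toFun p := (p.2 : ZMod 15) - 3 * (p.1 : ZMod 15)
  map_zero' := by simp
  map_add' p q := by simp only [Prod.fst_add, Prod.snd_add]; push_cast; ring

lemma closure_eq_ker :
    AddSubgroup.closure {(((4) : ℤ), ((-3) : ℤ)), (((1) : ℤ), ((3) : ℤ))} = phi15.ker := by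
  apply le_antisymm
  · rw [AddSubgroup.closure_le]
    rintro v hv
    simp only [Set.mem_insert_iff, Set.mem_singleton_iff] at hv
    rcases hv with rfl | rfl <;> simp [phi15, AddMonoidHom.mem_ker] <;> decide
  · rintro ⟨m, n⟩ hmn
    have h0 : ((n - 3 * m : ℤ) : ZMod 15) = 0 := by
      have h := hmn
      simp only [AddMonoidHom.mem_ker, phi15, AddMonoidHom.coe_mk, ZeroHom.coe_mk] at h
      push_cast
      linear_combination h
    obtain ⟨k, hk⟩ := (ZMod.intCast_zmod_eq_zero_iff_dvd _ _).mp h0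
    have hg1 : ((1:ℤ), (3:ℤ)) ∈ AddSubgroup.closure {(((4) : ℤ), ((-3) : ℤ)), (((1) : ℤ), ((3) : ℤ))} :=
      AddSubgroup.subset_closure (by simp)
    have hg2 : ((4:ℤ), (-3:ℤ)) ∈ AddSubgroup.closure {(((4) : ℤ), ((-3) : ℤ)), (((1) : ℤ), ((3) : ℤ))} :=
      AddSubgroup.subset_closure (by simp)
    have key : (m, n) = (m + 4*k) • ((1:ℤ), (3:ℤ)) + (-k) • ((4:ℤ), (-3:ℤ)) := by
      simp only [Prod.smul_mk, smul_eq_mul, Prod.mk_add_mk, Prod.mk.injEq]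
      constructor <;> omega
    rw [key]
    exact AddSubgroup.add_mem _ (AddSubgroup.zsmul_mem _ hg1 _) (AddSubgroup.zsmul_mem _ hg2 _)

lemma mem_dvd {m n : ℤ}
    (h : (m, n) ∈ AddSubgroup.closure {(((4) : ℤ), ((-3) : ℤ)), (((1) : ℤ), ((3) : ℤ))}) :
    (15:ℤ) ∣ n - 3*m := by
  rw [closure_eq_ker] at h
  simp only [AddMonoidHom.mem_ker, phi15, AddMonoidHom.coe_mk, ZeroHom.coe_mk] at h
  apply (ZMod.intCast_zmod_eq_zero_iff_dvd _ _).mp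
  push_cast
  linear_combination h

lemma phi15_surj : Function.Surjective phi15 := by
  intro n
  refine ⟨((0:ℤ), (n.val : ℤ)), ?_⟩
  simp [phi15, ZMod.natCast_val, ZMod.cast_id]

lemma index_15 : (AddSubgroup.closure {(((4) : ℤ), ((-3) : ℤ)), (((1) : ℤ), ((3) : ℤ))}).index = 15 := by
  rw [closure_eq_ker, AddSubgroup.index_ker]
  rw [AddMonoidHom.range_eq_top.mpr phi15_surj]
  rw [AddSubgroup.card_top, Nat.card_zmod]

end Aux

/-- with r = 3/8 and Λ = ⟨(4, -3), (1, 3)⟩ ≤ ℤ² of index 15,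
the separation of the induced 15-colouring of the tiles T(i, j) equals the stated
value, and this value is attained. -/
theorem statement12 :
    (AddSubgroup.closure {(((4) : ℤ), ((-3) : ℤ)), (((1) : ℤ), ((3) : ℤ))}).index = 15 ∧
    IsLeast
      (sameColourDists (3 / 8)
        (AddSubgroup.closure {(((4) : ℤ), ((-3) : ℤ)), (((1) : ℤ), ((3) : ℤ))}))
      (Real.sqrt (153 / 32)) := by
  have hX : (0:ℝ) < Real.sqrt (1 - (3/8:ℝ) ^ 2) / 2 := by
    have : (0:ℝ) < Real.sqrt (1 - (3/8:ℝ) ^ 2) := Real.sqrt_pos.mpr (by norm_num)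
    linarith
  have hX2 : (Real.sqrt (1 - (3/8:ℝ) ^ 2) / 2) ^ 2 = 55/256 := by
    rw [div_pow, Real.sq_sqrt (by norm_num : (0:ℝ) ≤ 1 - (3/8:ℝ) ^ 2)]
    norm_num
  set X : ℝ := Real.sqrt (1 - (3/8:ℝ) ^ 2) / 2 with hXdef
  refine ⟨index_15, ?_, ?_⟩
  · -- the value is attained
    refine ⟨0, 0, 1, 3,
      center (3/8) 0 0 + pt (Real.sqrt (1 - (3/8:ℝ) ^ 2) / 2) (3/8/2),
      center (3/8) 1 3 + pt (-(Real.sqrt (1 - (3/8:ℝ) ^ 2) / 2)) (-(3/8/2)),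
      by decide, ?_, ?_, ?_, ?_⟩
    · have : ((0:ℤ) - 1, (0:ℤ) - 3) = -((1:ℤ), (3:ℤ)) := by norm_num
      rw [this]
      exact neg_mem (AddSubgroup.subset_closure (by simp))
    · exact ⟨_, subset_convexHull ℝ _
        (Set.mem_insert_iff.mpr (Or.inr (Set.mem_insert_iff.mpr (Or.inl rfl)))), rfl⟩
    · refine ⟨_, subset_convexHull ℝ _ ?_, rfl⟩
      simp only [Set.mem_insert_iff, Set.mem_singleton_iff]
      tauto
    · rw [plane_dist]
      have e : ((center (3/8) 0 0 + pt X (3/8/2)) 0 - (center (3/8) 1 3 + pt (-X) (-(3/8/2))) 0) ^ 2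
          + ((center (3/8) 0 0 + pt X (3/8/2)) 1 - (center (3/8) 1 3 + pt (-X) (-(3/8/2))) 1) ^ 2
          = 153/32 := by
        simp only [center, pt]
        simp
        push_cast
        linear_combination (9:ℝ) * hX2
      rw [e]
  · -- lower bound
    rintro d ⟨i, j, i', j', p, q, hne, hmem, ⟨u, hu, rfl⟩, ⟨v, hv, rfl⟩, rfl⟩
    rw [plane_dist]
    apply Real.sqrt_le_sqrt
    obtain ⟨k, hk⟩ := mem_dvd hmem
    set s : ℤ := (i - i') + 3*k with hsdef
    set t : ℤ := (i - i') + 5*k with htdef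
    have hs : 2*(i - i') + (j - j') = 5*s := by omega
    have ht : (j - j') = 3*t := by omega
    have hpar : Even (s - t) := ⟨-k, by omega⟩
    have hne' : ¬(s = 0 ∧ t = 0) := by
      rintro ⟨hs0, ht0⟩
      exact hne (by rw [Prod.mk.injEq]; constructor <;> omega)
    have hsR : 2*((i:ℝ) - (i':ℝ)) + ((j:ℝ) - (j':ℝ)) = 5*(s:ℝ) := by exact_mod_cast hs
    have htR : (j:ℝ) - (j':ℝ) = 3*(t:ℝ) := by exact_mod_cast ht
    have hu' := hex_bounds X hXdef.symm hX hu
    have hv' := hex_bounds X hXdef.symm hX hv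
    have a1 := abs_sub (u 0) (v 0)
    have a2 := abs_sub (u 1) (v 1)
    have h1 : |u 0 - v 0| ≤ 2*X := by linarith [hu'.1, hv'.1]
    have h2 : |u 1 - v 1| ≤ 1 := by linarith [hu'.2.1, hv'.2.1]
    have h3 : 5/16 * |u 0 - v 0| + X * |u 1 - v 1| ≤ X := by
      have a3 : X * |u 1 - v 1| ≤ X * (|u 1| + |v 1|) := mul_le_mul_of_nonneg_left a2 hX.le
      nlinarith [hu'.2.2, hv'.2.2]
    have M := master X (u 0 - v 0) (u 1 - v 1) s t hX2 hX h1 h2 h3 hpar hne'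
    have e1 : (center (3/8) i j + u) 0 - (center (3/8) i' j' + v) 0
        = 5*(s:ℝ)*X + (u 0 - v 0) := by
      simp only [center, pt]
      simp
      linear_combination X * hsR
    have e2 : (center (3/8) i j + u) 1 - (center (3/8) i' j' + v) 1
        = 33/16*(t:ℝ) + (u 1 - v 1) := by
      simp only [center, pt]
      simp
      linear_combination (11/16 : ℝ) * htR
    rw [e1, e2]
    exact M
end
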